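/- The multiplicative update of the allocation matrix does not increase the regularized cost: with all entries of z, t, v strictly positive, c entrywise nonnegative, p entrywise nonnegative, μ ≥ 0, a fixed assignment b : Fin K → Fin B, and with ∑_{i,j} t(i,k)·v(j,k) + μ > 0 for every k, define z'(a,k) = ( z(a,k)·∑_{i,j} c(a,i,j)·t(i,k)·v(j,k)/m(a,i,j) + μ·p(b(k),a) ) / ( ∑_{i,j} t(i,k)·v(j,k) + μ ). If all entries z'(a,k) are strictly positive, then J(z',t,v,b) ≤ J(z,t,v,b). -/

import Mathlib

open Finset Real

/-- Generalized Kullback–Leibler divergence `D(b|a) = b·log(b/a) + a − b`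
(with the convention `0·log 0 = 0`, automatic since `Real.log 0 = 0`). -/
noncomputable def klD (q a : ℝ) : ℝ := q * Real.log (q / a) + a - q

/-- NTF model `m(a,i,j) = ∑ k, z(a,k)·t(i,k)·v(j,k)`. -/
noncomputable def ntfModel {A I J K : ℕ}
    (z : Fin A → Fin K → ℝ) (t : Fin I → Fin K → ℝ) (v : Fin J → Fin K → ℝ)
    (a : Fin A) (i : Fin I) (j : Fin J) : ℝ :=
  ∑ k, z a k * t i k * v j k

/-- Regularized cost
`J(z,t,v,b) = ∑_{a,i,j} D(c(a,i,j)|m(a,i,j)) + μ·∑_k ∑_a D(p(b(k),a)|z(a,k))`. -/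
noncomputable def ntfCost {A I J K B : ℕ}
    (c : Fin A → Fin I → Fin J → ℝ) (μ : ℝ) (p : Fin B → Fin A → ℝ)
    (z : Fin A → Fin K → ℝ) (t : Fin I → Fin K → ℝ) (v : Fin J → Fin K → ℝ)
    (b : Fin K → Fin B) : ℝ :=
  (∑ a, ∑ i, ∑ j, klD (c a i j) (ntfModel z t v a i j)) +
    μ * ∑ k, ∑ a, klD (p (b k) a) (z a k)


lemma klD_sub' (q x y : ℝ) (hq : 0 ≤ q) (hx : 0 < x) (hy : 0 < y) :
    (q * Real.log (q / y) + y - q) - (q * Real.log (q / x) + x - q) =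
      q * (Real.log x - Real.log y) + (y - x) := by
  rcases eq_or_lt_of_le hq with h | h
  · simp [← h]
  · rw [Real.log_div h.ne' hx.ne', Real.log_div h.ne' hy.ne']
    ring

lemma log_jensen {K : ℕ} (hK : Nonempty (Fin K)) (lam x : Fin K → ℝ)
    (hlam : ∀ k, 0 < lam k) (hx : ∀ k, 0 < x k) (hsum : ∑ k, lam k = 1) :
    ∑ k, lam k * Real.log (x k / lam k) ≤ Real.log (∑ k, x k) := by
  have hS : 0 < ∑ k, x k := Finset.sum_pos (fun k _ => hx k) univ_nonempty
  have key : ∀ k : Fin K, lam k * Real.log (x k / lam k) ≤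
      x k / (∑ k', x k') - lam k + lam k * Real.log (∑ k', x k') := by
    intro k
    have h1 : Real.log (x k / (lam k * ∑ k', x k')) ≤
        x k / (lam k * ∑ k', x k') - 1 :=
      Real.log_le_sub_one_of_pos (div_pos (hx k) (mul_pos (hlam k) hS))
    have h2 : Real.log (x k / (lam k * ∑ k', x k')) =
        Real.log (x k / lam k) - Real.log (∑ k', x k') := by
      rw [Real.log_div (hx k).ne' (mul_pos (hlam k) hS).ne',
        Real.log_mul (hlam k).ne' hS.ne',
        Real.log_div (hx k).ne' (hlam k).ne']
      ring
    rw [h2] at h1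
    have h4 : lam k * (x k / (lam k * ∑ k', x k')) = x k / ∑ k', x k' := by
      field_simp [(hlam k).ne', hS.ne']
    have h5 := mul_le_mul_of_nonneg_left h1 (hlam k).le
    rw [mul_sub, mul_sub, h4, mul_one] at h5
    linarith
  calc ∑ k, lam k * Real.log (x k / lam k)
      ≤ ∑ k, (x k / (∑ k', x k') - lam k + lam k * Real.log (∑ k', x k')) :=
        Finset.sum_le_sum (fun k _ => key k)
    _ = Real.log (∑ k', x k') := by
        rw [Finset.sum_add_distrib, Finset.sum_sub_distrib, ← Finset.sum_div,
          ← Finset.sum_mul, hsum, div_self hS.ne']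
        ring

lemma coord (α β w w' : ℝ) (hβ : 0 < β) (hw : 0 < w) (hw' : 0 < w')
    (hupd : w' = α / β) :
    -(α * Real.log (w' / w)) + β * (w' - w) ≤ 0 := by
  have hα : 0 < α := by
    have h : α = w' * β := by rw [hupd]; field_simp
    rw [h]; positivity
  have hlog : Real.log (β * w / α) ≤ β * w / α - 1 :=
    Real.log_le_sub_one_of_pos (by positivity)
  have h2 : Real.log (w' / w) = -Real.log (β * w / α) := by
    rw [hupd, ← Real.log_inv]
    congr 1
    rw [div_div, inv_div]
  have hcancel : α * (β * w / α) = β * w := by field_simp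
  have hβw' : β * w' = α := by rw [hupd]; field_simp
  rw [h2]
  nlinarith [mul_le_mul_of_nonneg_left hlog hα.le]

lemma data_bound {K : ℕ} (hK : Nonempty (Fin K)) (zk zk' tv : Fin K → ℝ) (cq : ℝ)
    (hz : ∀ k, 0 < zk k) (hz' : ∀ k, 0 < zk' k) (htv : ∀ k, 0 < tv k)
    (hc : 0 ≤ cq) :
    cq * (Real.log (∑ k, zk k * tv k) - Real.log (∑ k, zk' k * tv k))
      + ((∑ k, zk' k * tv k) - ∑ k, zk k * tv k)
    ≤ ∑ k, ((zk' k - zk k) * tv k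
        - cq * (zk k * tv k / ∑ k', zk k' * tv k') * Real.log (zk' k / zk k)) := by
  have hm : 0 < ∑ k, zk k * tv k :=
    Finset.sum_pos (fun k _ => mul_pos (hz k) (htv k)) univ_nonempty
  have hm' : 0 < ∑ k, zk' k * tv k :=
    Finset.sum_pos (fun k _ => mul_pos (hz' k) (htv k)) univ_nonempty
  have hlam_sum : ∑ k, zk k * tv k / (∑ k', zk k' * tv k') = 1 := by
    rw [← Finset.sum_div, div_self hm.ne']
  have hjen : ∑ k, (zk k * tv k / ∑ k', zk k' * tv k') * Real.log (zk' k / zk k)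
      ≤ Real.log (∑ k, zk' k * tv k) - Real.log (∑ k, zk k * tv k) := by
    have hmain := log_jensen hK (fun k => zk k * tv k / ∑ k', zk k' * tv k')
      (fun k => zk' k * tv k)
      (fun k => div_pos (mul_pos (hz k) (htv k)) hm)
      (fun k => mul_pos (hz' k) (htv k)) hlam_sum
    have hrw : ∀ k : Fin K,
        (zk k * tv k / ∑ k', zk k' * tv k') *
          Real.log ((zk' k * tv k) / (zk k * tv k / ∑ k', zk k' * tv k'))
        = (zk k * tv k / ∑ k', zk k' * tv k') * Real.log (zk' k / zk k)
          + (zk k * tv k / ∑ k', zk k' * tv k') * Real.log (∑ k', zk k' * tv k') := by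
      intro k
      rw [show (zk' k * tv k) / (zk k * tv k / ∑ k', zk k' * tv k')
            = (zk' k / zk k) * (∑ k', zk k' * tv k') by
          rw [div_div_eq_mul_div, div_mul_eq_mul_div,
            div_eq_div_iff (mul_pos (hz k) (htv k)).ne' (hz k).ne']
          ring,
        Real.log_mul (div_pos (hz' k) (hz k)).ne' hm.ne', mul_add]
    rw [Finset.sum_congr rfl (fun k _ => hrw k), Finset.sum_add_distrib,
      ← Finset.sum_mul, hlam_sum, one_mul] at hmain
    linarith
  have h2 : ∑ k, (zk' k - zk k) * tv k
      = (∑ k, zk' k * tv k) - ∑ k, zk k * tv k := by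
    rw [Finset.sum_congr rfl (fun k _ => sub_mul _ _ _), Finset.sum_sub_distrib]
  have hrhs : ∑ k, ((zk' k - zk k) * tv k
        - cq * (zk k * tv k / ∑ k', zk k' * tv k') * Real.log (zk' k / zk k))
      = ((∑ k, zk' k * tv k) - ∑ k, zk k * tv k)
        - cq * ∑ k, (zk k * tv k / ∑ k', zk k' * tv k') * Real.log (zk' k / zk k) := by
    rw [Finset.sum_sub_distrib, h2, Finset.mul_sum]
    ring_nf
    congr 1
    exact Finset.sum_congr rfl (fun x _ => by ring)
  rw [hrhs]
  nlinarith [mul_le_mul_of_nonneg_left hjen hc]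

lemma klD_sub (q x y : ℝ) (hq : 0 ≤ q) (hx : 0 < x) (hy : 0 < y) :
    klD q y - klD q x = q * (Real.log x - Real.log y) + (y - x) := by
  unfold klD
  rcases eq_or_lt_of_le hq with h | h
  · simp [← h]
  · rw [Real.log_div h.ne' hx.ne', Real.log_div h.ne' hy.ne']
    ring

/-- The multiplicative update of the allocation matrix does not increase the
regularized cost. -/
theorem stmt2 (A I J K B : ℕ)
    (z : Fin A → Fin K → ℝ) (t : Fin I → Fin K → ℝ) (v : Fin J → Fin K → ℝ)
    (hz : ∀ a k, 0 < z a k) (ht : ∀ i k, 0 < t i k) (hv : ∀ j k, 0 < v j k)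
    (c : Fin A → Fin I → Fin J → ℝ) (hc : ∀ a i j, 0 ≤ c a i j)
    (p : Fin B → Fin A → ℝ) (hp : ∀ b a, 0 ≤ p b a)
    (μ : ℝ) (hμ : 0 ≤ μ)
    (b : Fin K → Fin B)
    (hden : ∀ k : Fin K, 0 < (∑ i, ∑ j, t i k * v j k) + μ)
    (z' : Fin A → Fin K → ℝ)
    (hz'def : ∀ a k, z' a k =
      (z a k * ∑ i, ∑ j, c a i j * t i k * v j k / ntfModel z t v a i j
        + μ * p (b k) a) / ((∑ i, ∑ j, t i k * v j k) + μ))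
    (hz' : ∀ a k, 0 < z' a k) :
    ntfCost c μ p z' t v b ≤ ntfCost c μ p z t v b := by
  rcases Nat.eq_zero_or_pos K with hK0 | hKpos
  · subst hK0
    simp [ntfCost, ntfModel]
  have hK : Nonempty (Fin K) := Fin.pos_iff_nonempty.mp hKpos
  have hm : ∀ a i j, 0 < ntfModel z t v a i j := fun a i j =>
    Finset.sum_pos (fun k _ => mul_pos (mul_pos (hz a k) (ht i k)) (hv j k))
      univ_nonempty
  have hm' : ∀ a i j, 0 < ntfModel z' t v a i j := fun a i j =>
    Finset.sum_pos (fun k _ => mul_pos (mul_pos (hz' a k) (ht i k)) (hv j k))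
      univ_nonempty
  have hMz : ∀ a i j, (∑ k, z a k * (t i k * v j k)) = ntfModel z t v a i j := by
    intro a i j
    exact Finset.sum_congr rfl (fun k _ => (mul_assoc _ _ _).symm)
  have hMz' : ∀ a i j, (∑ k, z' a k * (t i k * v j k)) = ntfModel z' t v a i j := by
    intro a i j
    exact Finset.sum_congr rfl (fun k _ => (mul_assoc _ _ _).symm)
  rw [← sub_nonpos]
  have hsplit : ntfCost c μ p z' t v b - ntfCost c μ p z t v b =
      (∑ a, ∑ i, ∑ j, (klD (c a i j) (ntfModel z' t v a i j)
          - klD (c a i j) (ntfModel z t v a i j)))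
      + μ * ∑ k, ∑ a, (klD (p (b k) a) (z' a k) - klD (p (b k) a) (z a k)) := by
    unfold ntfCost
    simp only [Finset.sum_sub_distrib]
    ring
  rw [hsplit]
  -- the majorizing per-entry bound on the data term
  have hdata : (∑ a, ∑ i, ∑ j, (klD (c a i j) (ntfModel z' t v a i j)
        - klD (c a i j) (ntfModel z t v a i j)))
      ≤ ∑ a, ∑ i, ∑ j, ∑ k, ((z' a k - z a k) * (t i k * v j k)
          - c a i j * (z a k * (t i k * v j k) / ntfModel z t v a i j)
            * Real.log (z' a k / z a k)) := by
    refine Finset.sum_le_sum (fun a _ => Finset.sum_le_sum (fun i _ =>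
      Finset.sum_le_sum (fun j _ => ?_)))
    have hb := data_bound hK (z a) (z' a) (fun k => t i k * v j k) (c a i j)
      (fun k => hz a k) (fun k => hz' a k)
      (fun k => mul_pos (ht i k) (hv j k)) (hc a i j)
    beta_reduce at hb
    rw [hMz a i j, hMz' a i j] at hb
    rw [klD_sub _ _ _ (hc a i j) (hm a i j) (hm' a i j)]
    exact hb
  have hregeq : μ * ∑ k, ∑ a, (klD (p (b k) a) (z' a k) - klD (p (b k) a) (z a k))
      = μ * ∑ k, ∑ a', (p (b k) a' * (Real.log (z a' k) - Real.log (z' a' k))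
          + (z' a' k - z a' k)) := by
    congr 1
    exact Finset.sum_congr rfl (fun k _ => Finset.sum_congr rfl (fun a' _ =>
      klD_sub _ _ _ (hp _ _) (hz a' k) (hz' a' k)))
  rw [hregeq]
  refine le_trans (add_le_add_left hdata _) ?_
  -- reorder and factor the data bound
  have hre : (∑ a, ∑ i, ∑ j, ∑ k, ((z' a k - z a k) * (t i k * v j k)
          - c a i j * (z a k * (t i k * v j k) / ntfModel z t v a i j)
            * Real.log (z' a k / z a k)))
      = ∑ k, ∑ a', ((z' a' k - z a' k) * (∑ i, ∑ j, t i k * v j k)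
          - (∑ i, ∑ j, c a' i j * (z a' k * (t i k * v j k) / ntfModel z t v a' i j))
            * Real.log (z' a' k / z a' k)) := by
    have swap : ∀ a : Fin A, (∑ i, ∑ j, ∑ k, ((z' a k - z a k) * (t i k * v j k)
          - c a i j * (z a k * (t i k * v j k) / ntfModel z t v a i j)
            * Real.log (z' a k / z a k)))
        = ∑ k, ∑ i, ∑ j, ((z' a k - z a k) * (t i k * v j k)
          - c a i j * (z a k * (t i k * v j k) / ntfModel z t v a i j)
            * Real.log (z' a k / z a k)) := by
      intro a
      rw [show (∑ i, ∑ j, ∑ k, ((z' a k - z a k) * (t i k * v j k)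
          - c a i j * (z a k * (t i k * v j k) / ntfModel z t v a i j)
            * Real.log (z' a k / z a k)))
          = ∑ i, ∑ k, ∑ j, ((z' a k - z a k) * (t i k * v j k)
          - c a i j * (z a k * (t i k * v j k) / ntfModel z t v a i j)
            * Real.log (z' a k / z a k)) from
        Finset.sum_congr rfl (fun i _ => Finset.sum_comm)]
      exact Finset.sum_comm
    rw [Finset.sum_congr rfl (fun a _ => swap a), Finset.sum_comm]
    refine Finset.sum_congr rfl (fun k _ => Finset.sum_congr rfl (fun a' _ => ?_))
    simp only [Finset.sum_sub_distrib, ← Finset.sum_mul, ← Finset.mul_sum]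
  rw [hre]
  have hcomb : (∑ k, ∑ a', ((z' a' k - z a' k) * (∑ i, ∑ j, t i k * v j k)
          - (∑ i, ∑ j, c a' i j * (z a' k * (t i k * v j k) / ntfModel z t v a' i j))
            * Real.log (z' a' k / z a' k)))
      + μ * ∑ k, ∑ a', (p (b k) a' * (Real.log (z a' k) - Real.log (z' a' k))
          + (z' a' k - z a' k))
      = ∑ k, ∑ a', (((z' a' k - z a' k) * (∑ i, ∑ j, t i k * v j k)
          - (∑ i, ∑ j, c a' i j * (z a' k * (t i k * v j k) / ntfModel z t v a' i j))
            * Real.log (z' a' k / z a' k))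
        + μ * (p (b k) a' * (Real.log (z a' k) - Real.log (z' a' k))
          + (z' a' k - z a' k))) := by
    simp only [Finset.mul_sum, Finset.sum_add_distrib, mul_add]
  rw [hcomb]
  refine Finset.sum_nonpos (fun k _ => Finset.sum_nonpos (fun a' _ => ?_))
  have hnum : z a' k * (∑ i, ∑ j, c a' i j * t i k * v j k / ntfModel z t v a' i j)
      = ∑ i, ∑ j, c a' i j * (z a' k * (t i k * v j k) / ntfModel z t v a' i j) := by
    rw [Finset.mul_sum]
    refine Finset.sum_congr rfl (fun i _ => ?_)
    rw [Finset.mul_sum]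
    exact Finset.sum_congr rfl (fun j _ => by ring)
  have hupd : z' a' k =
      ((∑ i, ∑ j, c a' i j * (z a' k * (t i k * v j k) / ntfModel z t v a' i j))
        + μ * p (b k) a') / ((∑ i, ∑ j, t i k * v j k) + μ) := by
    rw [hz'def a' k, hnum]
  have hco := coord ((∑ i, ∑ j, c a' i j * (z a' k * (t i k * v j k) / ntfModel z t v a' i j))
      + μ * p (b k) a') ((∑ i, ∑ j, t i k * v j k) + μ) (z a' k) (z' a' k)
      (hden k) (hz a' k) (hz' a' k) hupd
  have hld : Real.log (z' a' k / z a' k) = Real.log (z' a' k) - Real.log (z a' k) :=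
    Real.log_div (hz' a' k).ne' (hz a' k).ne'
  have heq : ((z' a' k - z a' k) * (∑ i, ∑ j, t i k * v j k)
        - (∑ i, ∑ j, c a' i j * (z a' k * (t i k * v j k) / ntfModel z t v a' i j))
          * Real.log (z' a' k / z a' k))
      + μ * (p (b k) a' * (Real.log (z a' k) - Real.log (z' a' k))
        + (z' a' k - z a' k))
      = -(((∑ i, ∑ j, c a' i j * (z a' k * (t i k * v j k) / ntfModel z t v a' i j))
          + μ * p (b k) a') * Real.log (z' a' k / z a' k))
        + ((∑ i, ∑ j, t i k * v j k) + μ) * (z' a' k - z a' k) := by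
    rw [hld]; ring
  linarith
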